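/- For any symmetric 3×3 matrix R, the fourth-order tensor φ(R)_{ijkl} = δ_{ij}R_{kl} + δ_{kl}R_{ij} − (1/2)δ_{ik}R_{jl} − (1/2)δ_{jl}R_{ik} − (1/2)δ_{il}R_{jk} − (1/2)δ_{jk}R_{il} has zero totally symmetric part, possesses the minor and major symmetries, and R can be recovered from A = φ(R) via R_{ij} = A_{ijll} − (δ_{ij}/4)A_{kkll} (n = 3); in particular φ is injective. -/
import Mathlib


open Finset Matrix

/-- Kronecker delta. -/
noncomputable def kdelta (i j : Fin 3) : ℝ := if i = j then 1 else 0

/-- Backus' isomorphism `φ` from symmetric second-order tensors to asymmetric fourth-order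
tensors:
`φ(R)_{ijkl} = δ_{ij}R_{kl} + δ_{kl}R_{ij} − (1/2)(δ_{ik}R_{jl} + δ_{jl}R_{ik} + δ_{il}R_{jk} + δ_{jk}R_{il})`. -/
noncomputable def phi (R : Matrix (Fin 3) (Fin 3) ℝ) :
    Fin 3 → Fin 3 → Fin 3 → Fin 3 → ℝ :=
  fun i j k l =>
    kdelta i j * R k l + kdelta k l * R i j -
      (1 / 2 : ℝ) * kdelta i k * R j l - (1 / 2 : ℝ) * kdelta j l * R i k -
      (1 / 2 : ℝ) * kdelta i l * R j k - (1 / 2 : ℝ) * kdelta j k * R i l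

lemma kdelta_symm (x y : Fin 3) : kdelta x y = kdelta y x := by
  simp [kdelta, eq_comm]

lemma phi_triple (R : Matrix (Fin 3) (Fin 3) ℝ) (hR : R.IsSymm)
    (a b c d : Fin 3) :
    phi R a b c d + phi R a c b d + phi R a d c b = 0 := by
  have hRs : ∀ x y : Fin 3, R x y = R y x := fun x y => hR.apply y x
  simp only [phi, kdelta_symm c b, kdelta_symm d b, kdelta_symm d c,
    hRs c b, hRs d b, hRs d c]
  ring

lemma recov (R : Matrix (Fin 3) (Fin 3) ℝ) (hR : R.IsSymm) (i j : Fin 3) :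
    R i j = (∑ l, phi R i j l l) - kdelta i j / 4 * (∑ k, ∑ l, phi R k k l l) := by
  have hRs : ∀ x y : Fin 3, R x y = R y x := fun x y => hR.apply y x
  fin_cases i <;> fin_cases j <;>
    simp [phi, kdelta, Fin.sum_univ_three, hRs 1 0, hRs 2 0, hRs 2 1] <;> ring

/-- For a symmetric `3×3` matrix `R`, the tensor `φ(R)` has zero totally symmetric part,
has the minor and major symmetries, and `R` is recovered from `A = φ(R)` by
`R_{ij} = A_{ijll} − (δ_{ij}/4) A_{kkll}` (case `n = 3`); in particular `φ` is injective
on symmetric matrices. -/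
theorem phi_asymmetric_and_recovery (R : Matrix (Fin 3) (Fin 3) ℝ) (hR : R.IsSymm) :
    -- zero totally symmetric part
    (∀ f : Fin 4 → Fin 3,
      ∑ σ : Equiv.Perm (Fin 4), phi R (f (σ 0)) (f (σ 1)) (f (σ 2)) (f (σ 3)) = 0) ∧
    -- minor and major symmetries
    (∀ i j k l, phi R i j k l = phi R j i k l ∧ phi R i j k l = phi R i j l k ∧
      phi R i j k l = phi R k l i j) ∧
    -- recovery of R from A = φ(R)
    (∀ i j, R i j =
      (∑ l, phi R i j l l) - kdelta i j / 4 * (∑ k, ∑ l, phi R k k l l)) ∧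
    -- injectivity of φ on symmetric matrices
    (∀ R' : Matrix (Fin 3) (Fin 3) ℝ, R'.IsSymm → phi R = phi R' → R = R') := by
  have hRs : ∀ x y : Fin 3, R x y = R y x := fun x y => hR.apply y x
  refine ⟨?_, ?_, recov R hR, ?_⟩
  · intro f
    set F : Equiv.Perm (Fin 4) → ℝ :=
      fun σ => phi R (f (σ 0)) (f (σ 1)) (f (σ 2)) (f (σ 3)) with hF
    have h2 : ∑ σ : Equiv.Perm (Fin 4), F (σ * Equiv.swap 1 2) = ∑ σ, F σ :=
      Fintype.sum_equiv (Equiv.mulRight (Equiv.swap 1 2)) _ _ (fun σ => rfl)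
    have h3 : ∑ σ : Equiv.Perm (Fin 4), F (σ * Equiv.swap 1 3) = ∑ σ, F σ :=
      Fintype.sum_equiv (Equiv.mulRight (Equiv.swap 1 3)) _ _ (fun σ => rfl)
    have key : ∀ σ : Equiv.Perm (Fin 4),
        F σ + F (σ * Equiv.swap 1 2) + F (σ * Equiv.swap 1 3) = 0 := by
      intro σ
      simp only [hF, Equiv.Perm.mul_apply]
      norm_num [Equiv.swap_apply_def]
      exact phi_triple R hR (f (σ 0)) (f (σ 1)) (f (σ 2)) (f (σ 3))
    have hsum : ∑ σ : Equiv.Perm (Fin 4),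
        (F σ + F (σ * Equiv.swap 1 2) + F (σ * Equiv.swap 1 3)) = 0 :=
      Finset.sum_eq_zero (fun σ _ => key σ)
    rw [Finset.sum_add_distrib, Finset.sum_add_distrib, h2, h3] at hsum
    linarith
  · intro i j k l
    refine ⟨?_, ?_, ?_⟩
    · simp only [phi, kdelta_symm j i, hRs j i]; ring
    · simp only [phi, kdelta_symm l k, hRs l k]; ring
    · simp only [phi, kdelta_symm k i, kdelta_symm l j, kdelta_symm k j,
        kdelta_symm l i, hRs l j, hRs k i, hRs l i, hRs k j]; ring
  · intro R' hR' h
    ext i j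
    rw [recov R hR i j, recov R' hR' i j, h]
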